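/- arXiv:2207.09299 — 4 statements merged into one kernel-verified Lean document; each statement's English description precedes it below -/
import Mathlib

section
/- Let A : ℝⁿ → ℝ^{n×n} and g : ℝⁿ → ℝ^{n×m} be continuous, let Q be a symmetric positive semidefinite n×n real matrix and R a symmetric positive definite m×m real matrix, and set f(x) = A(x)x. Let P : ℝⁿ → ℝ^{n×n} be continuously differentiable with P(x) symmetric for all x, solving pointwise P(x)A(x) + A(x)ᵀP(x) − P(x)g(x)R⁻¹g(x)ᵀP(x) + Q = 0 for every x. Define V(x) = ½ xᵀP(x)x, so that ∇V(x) = P(x)x + φ(x) with φ(x)_k = ½ Σ_{i,j} x_i x_j ∂_{x_k}P_{ij}(x). Then the Hamilton–Jacobi–Bellman residual satisfies, for every x ∈ ℝⁿ, N(x,V) := −½ ∇V(x)ᵀ g(x) R⁻¹ g(x)ᵀ ∇V(x) + ∇V(x)ᵀ f(x) + ½ xᵀQx = φ(x)ᵀ( A(x) − g(x)R⁻¹g(x)ᵀP(x) )x − ½ φ(x)ᵀ g(x) R⁻¹ g(x)ᵀ φ(x). -/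
open Matrix

lemma bilin_symm {n : ℕ} (M : Matrix (Fin n) (Fin n) ℝ) (hM : Mᵀ = M)
    (a b : Fin n → ℝ) : a ⬝ᵥ M *ᵥ b = b ⬝ᵥ M *ᵥ a := by
  rw [dotProduct_mulVec, ← mulVec_transpose, hM, dotProduct_comm]

lemma key_algebra {n : ℕ} (Ax S Px Q : Matrix (Fin n) (Fin n) ℝ)
    (hSt : Sᵀ = S) (hPt : Pxᵀ = Px)
    (hQ : Q = Px * S * Px - Px * Ax - Axᵀ * Px) (x ψ : Fin n → ℝ) :
    -(1/2) * ((Px *ᵥ x + ψ) ⬝ᵥ S *ᵥ (Px *ᵥ x + ψ))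
      + (Px *ᵥ x + ψ) ⬝ᵥ Ax *ᵥ x + (1/2) * (x ⬝ᵥ Q *ᵥ x)
    = ψ ⬝ᵥ (Ax - S * Px) *ᵥ x - (1/2) * (ψ ⬝ᵥ S *ᵥ ψ) := by
  have hcross : (Px *ᵥ x) ⬝ᵥ S *ᵥ ψ = ψ ⬝ᵥ S *ᵥ (Px *ᵥ x) := bilin_symm S hSt _ _
  have hQx : x ⬝ᵥ Q *ᵥ x
      = (Px *ᵥ x) ⬝ᵥ S *ᵥ (Px *ᵥ x) - 2 * ((Px *ᵥ x) ⬝ᵥ Ax *ᵥ x) := by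
    rw [hQ, sub_mulVec, sub_mulVec, dotProduct_sub, dotProduct_sub]
    have t1 : x ⬝ᵥ (Px * S * Px) *ᵥ x = (Px *ᵥ x) ⬝ᵥ S *ᵥ (Px *ᵥ x) := by
      rw [← mulVec_mulVec, ← mulVec_mulVec, bilin_symm Px hPt, dotProduct_comm]
    have t2 : x ⬝ᵥ (Px * Ax) *ᵥ x = (Px *ᵥ x) ⬝ᵥ Ax *ᵥ x := by
      rw [← mulVec_mulVec, bilin_symm Px hPt, dotProduct_comm]
    have t3 : x ⬝ᵥ (Axᵀ * Px) *ᵥ x = (Px *ᵥ x) ⬝ᵥ Ax *ᵥ x := by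
      rw [← mulVec_mulVec, dotProduct_mulVec, vecMul_transpose, dotProduct_comm]
    rw [t1, t2, t3]; ring
  have hSP : ψ ⬝ᵥ (S * Px) *ᵥ x = ψ ⬝ᵥ S *ᵥ (Px *ᵥ x) := by
    rw [← mulVec_mulVec]
  rw [sub_mulVec, dotProduct_sub, hSP, hQx]
  simp only [mulVec_add, dotProduct_add, add_dotProduct]
  rw [hcross]
  ring

lemma grad_V (n : ℕ)
    (P : (Fin n → ℝ) → Matrix (Fin n) (Fin n) ℝ)
    (hP : ∀ i j, ContDiff ℝ 1 (fun x => P x i j))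
    (hPsymm : ∀ x, (P x).IsSymm)
    (V : (Fin n → ℝ) → ℝ)
    (hV : ∀ x, V x = (1/2) * (x ⬝ᵥ (P x).mulVec x))
    (φ : (Fin n → ℝ) → Fin n → ℝ)
    (hφ : ∀ x k, φ x k
      = (1/2) * ∑ i, ∑ j, x i * x j * fderiv ℝ (fun y => P y i j) x (Pi.single k 1))
    (x : Fin n → ℝ) (k : Fin n) :
    fderiv ℝ V x (Pi.single k 1) = (P x).mulVec x k + φ x k := by
  have hPd : ∀ i j, HasFDerivAt (fun y => P y i j) (fderiv ℝ (fun y => P y i j) x) x :=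
    fun i j => (((hP i j).differentiable one_ne_zero) x).hasFDerivAt
  have hVfun : V = fun y => (1/2 : ℝ) * ∑ i, ∑ j, y i * P y i j * y j := by
    funext y
    rw [hV]
    simp [dotProduct, mulVec, Finset.mul_sum, mul_assoc]
  have hterm : ∀ i j, HasFDerivAt (fun y : Fin n → ℝ => y i * P y i j * y j)
      ((x i * P x i j) • (ContinuousLinearMap.proj j : (Fin n → ℝ) →L[ℝ] ℝ)
        + (x j) • ((x i) • fderiv ℝ (fun y => P y i j) x
            + (P x i j) • (ContinuousLinearMap.proj i : (Fin n → ℝ) →L[ℝ] ℝ))) x := by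
    intro i j
    exact (((ContinuousLinearMap.proj i).hasFDerivAt.mul (hPd i j)).mul
      (ContinuousLinearMap.proj j).hasFDerivAt)
  have hsum : HasFDerivAt (fun y : Fin n → ℝ => ∑ i, ∑ j, y i * P y i j * y j)
      (∑ i, ∑ j, ((x i * P x i j) • (ContinuousLinearMap.proj j : (Fin n → ℝ) →L[ℝ] ℝ)
        + (x j) • ((x i) • fderiv ℝ (fun y => P y i j) x
            + (P x i j) • (ContinuousLinearMap.proj i : (Fin n → ℝ) →L[ℝ] ℝ)))) x := by
    apply HasFDerivAt.fun_sum
    intro i _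
    exact HasFDerivAt.fun_sum (fun j _ => hterm i j)
  have hVd : HasFDerivAt V ((1/2 : ℝ) • (∑ i, ∑ j,
      ((x i * P x i j) • (ContinuousLinearMap.proj j : (Fin n → ℝ) →L[ℝ] ℝ)
        + (x j) • ((x i) • fderiv ℝ (fun y => P y i j) x
            + (P x i j) • (ContinuousLinearMap.proj i : (Fin n → ℝ) →L[ℝ] ℝ))))) x := by
    rw [hVfun]; exact hsum.const_mul (1/2)
  rw [hVd.fderiv]
  simp only [ContinuousLinearMap.smul_apply, ContinuousLinearMap.sum_apply,
    ContinuousLinearMap.add_apply, ContinuousLinearMap.proj_apply, Pi.single_apply,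
    smul_eq_mul]
  rw [hφ]
  have hsymm : ∀ i j, P x i j = P x j i := fun i j => ((hPsymm x).apply j i)
  have eA : (∑ i, ∑ j, x i * P x i j * (if j = k then (1:ℝ) else 0)) = (P x).mulVec x k := by
    simp only [mul_ite, mul_one, mul_zero, Finset.sum_ite_eq', Finset.mem_univ, if_true,
      mulVec, dotProduct]
    exact Finset.sum_congr rfl fun i _ => by rw [hsymm i k]; ring
  have eB : (∑ i, ∑ j, x j * (x i * fderiv ℝ (fun y => P y i j) x (Pi.single k 1)))
      = ∑ i, ∑ j, x i * x j * fderiv ℝ (fun y => P y i j) x (Pi.single k 1) :=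
    Finset.sum_congr rfl fun i _ => Finset.sum_congr rfl fun j _ => by ring
  have eC : (∑ i, ∑ j, x j * (P x i j * (if i = k then (1:ℝ) else 0)))
      = (P x).mulVec x k := by
    have h1 : ∀ i : Fin n, (∑ j, x j * (P x i j * (if i = k then (1:ℝ) else 0)))
        = if i = k then (P x).mulVec x k else 0 := by
      intro i; by_cases h : i = k <;> simp [h, mulVec, dotProduct, mul_comm]
    rw [Finset.sum_congr rfl fun i _ => h1 i]
    simp
  simp only [mul_add, Finset.sum_add_distrib]
  rw [eA, eB, eC]
  ring

/-- For a pointwise SDRE solution `P` and `V(x) = ½xᵀP(x)x` (whose gradient is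
`∇V(x) = P(x)x + φ(x)` with `φ(x)_k = ½ Σ_{i,j} x_i x_j ∂_{x_k}P_{ij}(x)`), the HJB
residual satisfies
`N(x,V) = φ(x)ᵀ(A(x) − g(x)R⁻¹g(x)ᵀP(x))x − ½ φ(x)ᵀ g(x)R⁻¹g(x)ᵀ φ(x)`. -/
theorem sdre_hjb_residual_formula (n m : ℕ) (hn : 0 < n) (hm : 0 < m)
    (A : (Fin n → ℝ) → Matrix (Fin n) (Fin n) ℝ)
    (g : (Fin n → ℝ) → Matrix (Fin n) (Fin m) ℝ)
    (hA : ∀ i j, Continuous fun x => A x i j)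
    (hg : ∀ i j, Continuous fun x => g x i j)
    (Q : Matrix (Fin n) (Fin n) ℝ) (hQ : Q.PosSemidef)
    (R : Matrix (Fin m) (Fin m) ℝ) (hR : R.PosDef)
    (f : (Fin n → ℝ) → Fin n → ℝ) (hf : ∀ x, f x = (A x).mulVec x)
    (P : (Fin n → ℝ) → Matrix (Fin n) (Fin n) ℝ)
    (hP : ∀ i j, ContDiff ℝ 1 (fun x => P x i j))
    (hPsymm : ∀ x, (P x).IsSymm)
    (hSDRE : ∀ x, P x * A x + (A x)ᵀ * P x - P x * g x * R⁻¹ * (g x)ᵀ * P x + Q = 0)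
    (V : (Fin n → ℝ) → ℝ)
    (hV : ∀ x, V x = (1/2) * (x ⬝ᵥ (P x).mulVec x))
    (φ : (Fin n → ℝ) → Fin n → ℝ)
    (hφ : ∀ x k, φ x k
      = (1/2) * ∑ i, ∑ j, x i * x j * fderiv ℝ (fun y => P y i j) x (Pi.single k 1)) :
    ∀ x : Fin n → ℝ,
      -(1/2) * ((fun k => fderiv ℝ V x (Pi.single k 1)) ⬝ᵥ
          (g x * R⁻¹ * (g x)ᵀ).mulVec (fun k => fderiv ℝ V x (Pi.single k 1)))
        + (fun k => fderiv ℝ V x (Pi.single k 1)) ⬝ᵥ f x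
        + (1/2) * (x ⬝ᵥ Q.mulVec x)
      = φ x ⬝ᵥ (A x - g x * R⁻¹ * (g x)ᵀ * P x).mulVec x
        - (1/2) * (φ x ⬝ᵥ (g x * R⁻¹ * (g x)ᵀ).mulVec (φ x)) := by
  intro x
  have hgrad : (fun k => fderiv ℝ V x (Pi.single k 1)) = (P x).mulVec x + φ x := by
    funext k
    rw [grad_V n P hP hPsymm V hV φ hφ x k]
    rfl
  have hRt : Rᵀ = R := by
    have := hR.1
    rw [Matrix.IsHermitian] at this
    simpa using this
  have hSt : (g x * R⁻¹ * (g x)ᵀ)ᵀ = g x * R⁻¹ * (g x)ᵀ := by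
    rw [transpose_mul, transpose_mul, transpose_transpose, transpose_nonsing_inv,
      hRt, Matrix.mul_assoc]
  have hPt : (P x)ᵀ = P x := hPsymm x
  have h4 : P x * A x + (A x)ᵀ * P x - P x * (g x * R⁻¹ * (g x)ᵀ) * P x + Q = 0 := by
    have := hSDRE x
    simpa only [Matrix.mul_assoc] using this
  have hQeq : Q = P x * (g x * R⁻¹ * (g x)ᵀ) * P x - P x * A x - (A x)ᵀ * P x := by
    have h5 : Q = -(P x * A x + (A x)ᵀ * P x - P x * (g x * R⁻¹ * (g x)ᵀ) * P x) :=
      eq_neg_of_add_eq_zero_right h4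
    rw [h5]; noncomm_ring
  rw [hf, hgrad]
  exact key_algebra (A x) (g x * R⁻¹ * (g x)ᵀ) (P x) Q hSt hPt hQeq x (φ x)
end

section
/- Let ε ∈ ℝ and x₁ ∈ ℝ, and set a = ε x₁², s = √(a² + 1), p₁₂ = a + s, p₂₂ = √(1 + 2p₁₂), p₁₁ = s · p₂₂. Then the symmetric matrix P = [[p₁₁, p₁₂],[p₁₂, p₂₂]] is well defined (1 + 2p₁₂ > 0) and solves the state-dependent algebraic Riccati equation P A + Aᵀ P − P B Bᵀ P + I₂ = 0, where A = [[0, 1],[a, 0]] and B = (0, 1)ᵀ. -/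
open Matrix

/-- Closed-form pointwise solution of the state-dependent Riccati equation for the 2D
nonlinear example `A = [[0,1],[εx₁²,0]]`, `B = (0,1)ᵀ`, `Q = R = I₂`:  with `a = εx₁²`,
`s = √(a²+1)`, `p₁₂ = a + s`, `p₂₂ = √(1+2p₁₂)`, `p₁₁ = s·p₂₂`, the matrix
`P = [[p₁₁,p₁₂],[p₁₂,p₂₂]]` is well defined and solves `PA + AᵀP − PBBᵀP + I₂ = 0`. -/
theorem sdre_closed_form_2d_nonlinear (ε x₁ : ℝ)
    (a s p₁₂ p₂₂ p₁₁ : ℝ)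
    (ha : a = ε * x₁ ^ 2) (hs : s = Real.sqrt (a ^ 2 + 1))
    (h12 : p₁₂ = a + s) (h22 : p₂₂ = Real.sqrt (1 + 2 * p₁₂)) (h11 : p₁₁ = s * p₂₂)
    (P : Matrix (Fin 2) (Fin 2) ℝ) (hP : P = !![p₁₁, p₁₂; p₁₂, p₂₂])
    (A : Matrix (Fin 2) (Fin 2) ℝ) (hA : A = !![0, 1; a, 0])
    (B : Matrix (Fin 2) (Fin 1) ℝ) (hB : B = !![0; 1]) :
    1 + 2 * p₁₂ > 0 ∧ P * A + Aᵀ * P - P * B * Bᵀ * P + 1 = 0 := by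
  have hs2 : s ^ 2 = a ^ 2 + 1 := by
    rw [hs, Real.sq_sqrt]; positivity
  have hslt : |a| < s := by
    rw [hs]
    have : Real.sqrt (a ^ 2) < Real.sqrt (a ^ 2 + 1) :=
      Real.sqrt_lt_sqrt (by positivity) (by linarith)
    simpa [Real.sqrt_sq_eq_abs] using this
  have hpos : 1 + 2 * p₁₂ > 0 := by
    have := abs_le.mp (le_of_lt hslt)
    nlinarith [this.1]
  refine ⟨hpos, ?_⟩
  have hp2 : p₂₂ ^ 2 = 1 + 2 * p₁₂ := by
    rw [h22, Real.sq_sqrt hpos.le]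
  subst hP hA hB h12 h11
  ext i j
  fin_cases i <;> fin_cases j <;>
    simp [Matrix.mul_apply, Fin.sum_univ_succ, Matrix.one_apply, Matrix.vecHead, Matrix.vecTail, Matrix.vecMul, dotProduct] <;>
    nlinarith [hs2, hp2]
end

section
/- Let ε ∈ ℝ and x₁ ∈ ℝ, and set a = ε x₁², s = √(a² + 1), p₁₂ = a + s, p₂₂ = √(1 + 2p₁₂), p₁₁ = s · p₂₂, and P = [[p₁₁, p₁₂],[p₁₂, p₂₂]]. Then det P = 1 + √(ε² x₁⁴ + 1) and P is positive definite. -/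
open Matrix

/-- For the closed-form SDRE solution `P` of the 2D nonlinear example (with `a = εx₁²`,
`s = √(a²+1)`, `p₁₂ = a + s`, `p₂₂ = √(1+2p₁₂)`, `p₁₁ = s·p₂₂`), one has
`det P = 1 + √(ε²x₁⁴ + 1)` and `P` is positive definite. -/
theorem sdre_closed_form_det_posdef (ε x₁ : ℝ)
    (a s p₁₂ p₂₂ p₁₁ : ℝ)
    (ha : a = ε * x₁ ^ 2) (hs : s = Real.sqrt (a ^ 2 + 1))
    (h12 : p₁₂ = a + s) (h22 : p₂₂ = Real.sqrt (1 + 2 * p₁₂)) (h11 : p₁₁ = s * p₂₂)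
    (P : Matrix (Fin 2) (Fin 2) ℝ) (hP : P = !![p₁₁, p₁₂; p₁₂, p₂₂]) :
    P.det = 1 + Real.sqrt (ε ^ 2 * x₁ ^ 4 + 1) ∧ P.PosDef := by
  have hs1 : (1:ℝ) ≤ s := by
    rw [hs]
    have := Real.sqrt_le_sqrt (show (1:ℝ) ≤ a ^ 2 + 1 by nlinarith)
    simpa using this
  have hs2 : s ^ 2 = a ^ 2 + 1 := by
    rw [hs, Real.sq_sqrt (by positivity)]
  have hsa : -s ≤ a := by
    by_contra h
    push_neg at h
    nlinarith
  have h12nn : 0 ≤ p₁₂ := by rw [h12]; linarith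
  have h221 : (1:ℝ) ≤ p₂₂ := by
    rw [h22]
    have := Real.sqrt_le_sqrt (show (1:ℝ) ≤ 1 + 2 * p₁₂ by linarith)
    simpa using this
  have h22sq : p₂₂ ^ 2 = 1 + 2 * p₁₂ := by
    rw [h22, Real.sq_sqrt (by linarith)]
  have hdet : p₁₁ * p₂₂ - p₁₂ * p₁₂ = 1 + s := by
    rw [h11]
    nlinarith [hs2, h22sq, h12]
  have hss : s = Real.sqrt (ε ^ 2 * x₁ ^ 4 + 1) := by
    rw [hs, ha]; ring_nf
  constructor
  · rw [hP, Matrix.det_fin_two_of, hdet, hss]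
  · constructor
    · rw [hP]
      ext i j
      fin_cases i <;> fin_cases j <;>
        simp [Matrix.conjTranspose, Matrix.vecHead, Matrix.vecTail]
    · intro y hy
      rw [hP]
      have hy0 : y 0 ≠ 0 ∨ y 1 ≠ 0 := by
        by_contra h
        push_neg at h
        exact hy (Finsupp.ext fun i => by fin_cases i <;> simp [h.1, h.2])
      have key : 0 < p₁₁ * (y 0) ^ 2 + 2 * p₁₂ * (y 0 * y 1) + p₂₂ * (y 1) ^ 2 := by
        have h11pos : 0 < p₁₁ := by rw [h11]; nlinarith
        have hdetpos : 0 < p₁₁ * p₂₂ - p₁₂ * p₁₂ := by rw [hdet]; linarith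
        rcases hy0 with h0 | h1
        · nlinarith [sq_nonneg (p₂₂ * y 1 + p₁₂ * y 0), pow_pos (abs_pos.mpr h0) 2, sq_abs (y 0), mul_pos hdetpos (by positivity : (0:ℝ) < y 0 ^ 2)]
        · nlinarith [sq_nonneg (p₁₁ * y 0 + p₁₂ * y 1), pow_pos (abs_pos.mpr h1) 2, sq_abs (y 1), mul_pos hdetpos (by positivity : (0:ℝ) < y 1 ^ 2)]
      simp only [Finsupp.sum_fintype, zero_mul, mul_zero, implies_true, Finsupp.sum_zero_index,
        Finset.sum_const_zero, star_zero]
      simp only [dotProduct, mulVec, Fin.sum_univ_two, Matrix.cons_val', Matrix.cons_val_zero,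
        Matrix.cons_val_one, Matrix.head_cons, Matrix.empty_val', Matrix.cons_val_fin_one,
        Matrix.head_fin_const, Matrix.of_apply, Pi.star_apply, star_trivial]
      nlinarith [key]
end

section
/- Let x ∈ ℝ² with x ≠ 0, and define y(t) = e^{√6 t} x and u(t) = −(1−√6) y(t) for t ≥ 0. Then the cost integral diverges: ½ ∫₀^T ( ‖y(t)‖² + (1/5)‖u(t)‖² ) dt → ∞ as T → ∞. -/
open Matrix Filter intervalIntegral

/-- For `x ≠ 0`, `y(t) = e^{√6 t}x` and `u(t) = −(1−√6)y(t)`, the LQR cost diverges: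
`½∫₀^T (‖y‖² + (1/5)‖u‖²) dt → ∞` as `T → ∞`. -/
theorem cost_of_destabilizing_feedback_diverges (x : EuclideanSpace ℝ (Fin 2))
    (hx : x ≠ 0)
    (y : ℝ → EuclideanSpace ℝ (Fin 2)) (u : ℝ → EuclideanSpace ℝ (Fin 2))
    (hy : ∀ t, y t = Real.exp (Real.sqrt 6 * t) • x)
    (hu : ∀ t, u t = -((1 - Real.sqrt 6) • y t)) :
    Tendsto (fun T : ℝ => (1/2) * ∫ t in (0 : ℝ)..T, (‖y t‖ ^ 2 + (1/5) * ‖u t‖ ^ 2))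
      atTop atTop := by
  have hyf : y = fun t => Real.exp (Real.sqrt 6 * t) • x := funext hy
  subst hyf
  have huf : u = fun t => -((1 - Real.sqrt 6) • Real.exp (Real.sqrt 6 * t) • x) := by
    funext t; rw [hu t]
  subst huf
  set c := ‖x‖ ^ 2 with hc
  have hxpos : 0 < ‖x‖ := norm_pos_iff.mpr hx
  have hcpos : 0 < c := by positivity
  have hcont : Continuous (fun t : ℝ =>
      ‖Real.exp (Real.sqrt 6 * t) • x‖ ^ 2 +
        (1/5) * ‖-((1 - Real.sqrt 6) • Real.exp (Real.sqrt 6 * t) • x)‖ ^ 2) := by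
    fun_prop
  have hbound : ∀ T : ℝ, 0 ≤ T →
      c * T ≤ ∫ t in (0:ℝ)..T,
        (‖Real.exp (Real.sqrt 6 * t) • x‖ ^ 2 +
          (1/5) * ‖-((1 - Real.sqrt 6) • Real.exp (Real.sqrt 6 * t) • x)‖ ^ 2) := by
    intro T hT
    have h1 : (∫ _ in (0:ℝ)..T, c) = c * T := by simp [mul_comm]
    rw [← h1]
    apply intervalIntegral.integral_mono_on hT intervalIntegrable_const
      (hcont.intervalIntegrable _ _)
    intro t ht
    have he : 1 ≤ Real.exp (Real.sqrt 6 * t) :=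
      Real.one_le_exp (mul_nonneg (Real.sqrt_nonneg _) ht.1)
    have hle : ‖x‖ ≤ ‖Real.exp (Real.sqrt 6 * t) • x‖ := by
      rw [norm_smul, Real.norm_eq_abs, abs_of_pos (Real.exp_pos _)]
      nlinarith [norm_nonneg x]
    have h2 : c ≤ ‖Real.exp (Real.sqrt 6 * t) • x‖ ^ 2 := by
      rw [hc]
      exact pow_le_pow_left₀ (norm_nonneg x) hle 2
    nlinarith [norm_nonneg (-((1 - Real.sqrt 6) • Real.exp (Real.sqrt 6 * t) • x)),
      sq_nonneg ‖-((1 - Real.sqrt 6) • Real.exp (Real.sqrt 6 * t) • x)‖]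
  have hlin : Tendsto (fun T : ℝ => (1/2) * (c * T)) atTop atTop := by
    exact (tendsto_id.const_mul_atTop hcpos).const_mul_atTop (by norm_num)
  refine tendsto_atTop_mono' atTop ?_ hlin
  filter_upwards [eventually_ge_atTop (0:ℝ)] with T hT
  exact mul_le_mul_of_nonneg_left (hbound T hT) (by norm_num)
end
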